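/- For 0 < α < 2, the improper integral ∫₀^∞ y^{-α} sin(y) dy equals (π/2) / (Γ(α) sin(πα/2)). -/

import Mathlib

open Real Filter intervalIntegral MeasureTheory Set

/-- Laplace transform of sin on a finite interval. -/
lemma laplace_sin_interval (t T : ℝ) :
    ∫ y in (0:ℝ)..T, Real.exp (-(t*y)) * Real.sin y
      = (1 - Real.exp (-(t*T)) * (t * Real.sin T + Real.cos T)) / (t^2+1) := by
  have hne : t^2 + 1 ≠ 0 := by positivity
  have key : ∀ y : ℝ, HasDerivAt (fun y => -(Real.exp (-(t*y)) * (t * Real.sin y + Real.cos y)) / (t^2+1))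
      (Real.exp (-(t*y)) * Real.sin y) y := by
    intro y
    have h1 : HasDerivAt (fun y : ℝ => Real.exp (-(t*y))) (-t * Real.exp (-(t*y))) y := by
      have := (Real.hasDerivAt_exp (-(t*y))).comp y (((hasDerivAt_id y).const_mul t).neg)
      simpa [mul_comm, Function.comp_def, Pi.neg_def] using this
    have h2 : HasDerivAt (fun y : ℝ => t * Real.sin y + Real.cos y)
        (t * Real.cos y - Real.sin y) y :=
      ((Real.hasDerivAt_sin y).const_mul t).add (Real.hasDerivAt_cos y)
    have h3 := ((h1.mul h2).neg).div_const (t^2+1)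
    refine h3.congr_deriv ?_
    rw [div_eq_iff hne]
    ring
  rw [intervalIntegral.integral_eq_sub_of_hasDerivAt (fun y _ => key y) ?cont]
  case cont =>
    apply Continuous.intervalIntegrable
    continuity
  simp [Real.sin, Real.cos]
  ring


lemma gamma_rep {a r : ℝ} (ha : 0 < a) (hr : 0 < r) :
    ∫ t in Ioi (0:ℝ), t ^ (a-1) * Real.exp (-(r*t)) = Real.Gamma a * r ^ (-a) := by
  rw [Real.integral_rpow_mul_exp_neg_mul_Ioi ha hr, one_div, ← Real.rpow_neg_one,
    ← Real.rpow_mul hr.le, mul_comm]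
  norm_num

lemma gamma_integrable {a r : ℝ} (ha : 0 < a) (hr : 0 < r) :
    IntegrableOn (fun t : ℝ => t ^ (a-1) * Real.exp (-(r*t))) (Ioi 0) := by
  have := integrableOn_rpow_mul_exp_neg_mul_rpow (p := 1) (s := a - 1) (b := r)
    (by linarith) one_pos hr
  refine this.congr_fun (fun x hx => ?_) measurableSet_Ioi
  beta_reduce
  rw [Real.rpow_one]
  ring_nf


lemma K_eval {s : ℝ} (hs0 : 0 < s) (hs1 : s < 1) :
    ∫ u in Ioi (0:ℝ), u ^ (s-1) / (1+u) = Real.Gamma s * Real.Gamma (1-s) := by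
  set μ := volume.restrict (Ioi (0:ℝ)) with hμ
  set f : ℝ → ℝ → ℝ := fun v u => u ^ (s-1) * Real.exp (-((1+u)*v)) with hf
  have hmeas : AEStronglyMeasurable (Function.uncurry f) (μ.prod μ) := by
    apply Measurable.aestronglyMeasurable
    exact (measurable_snd.pow_const _).mul
      (((measurable_const.add measurable_snd).mul measurable_fst).neg.exp)
  -- pointwise rewrite for fixed v
  have hfv : ∀ v : ℝ, (fun u => f v u) = fun u => Real.exp (-v) * (u ^ (s-1) * Real.exp (-(v*u))) := by
    intro v; funext u
    rw [hf]; simp only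
    rw [mul_comm (Real.exp (-v)), mul_assoc, ← Real.exp_add]
    ring_nf
  have hint_v : ∀ v ∈ Ioi (0:ℝ), Integrable (fun u => f v u) μ := by
    intro v hv
    rw [hfv v]
    exact ((gamma_integrable hs0 hv).const_mul _)
  have hinner : ∀ v ∈ Ioi (0:ℝ), ∫ u, f v u ∂μ = Real.Gamma s * (Real.exp (-v) * v ^ (-s)) := by
    intro v hv
    rw [hfv v, MeasureTheory.integral_const_mul, gamma_rep hs0 hv]
    ring
  have hint : Integrable (Function.uncurry f) (μ.prod μ) := by
    rw [MeasureTheory.integrable_prod_iff hmeas]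
    constructor
    · filter_upwards [ae_restrict_mem measurableSet_Ioi] with v hv
      exact hint_v v hv
    · have base : Integrable (fun v => Real.Gamma s * (Real.exp (-v) * v ^ ((1-s)-1))) μ :=
        (Real.GammaIntegral_convergent (by linarith : (0:ℝ) < 1 - s)).const_mul _
      apply base.congr
      filter_upwards [ae_restrict_mem measurableSet_Ioi] with v hv
      have h1 : ∀ u ∈ Ioi (0:ℝ), ‖f v u‖ = f v u := by
        intro u hu
        rw [Real.norm_eq_abs, abs_of_nonneg]
        exact mul_nonneg (Real.rpow_nonneg (le_of_lt hu) _) (Real.exp_nonneg _)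
      simp only [Function.uncurry_apply_pair]
      have h2 : ∫ u, ‖f v u‖ ∂μ = ∫ u, f v u ∂μ := by
        rw [hμ]; exact setIntegral_congr_fun measurableSet_Ioi h1
      rw [hμ] at h2 ⊢
      rw [h2, ← hμ, hinner v hv]
      norm_num
  have swap := MeasureTheory.integral_integral_swap hint
  -- LHS of swap
  have lhs_eq : ∫ v, ∫ u, f v u ∂μ ∂μ = Real.Gamma s * Real.Gamma (1-s) := by
    rw [setIntegral_congr_fun measurableSet_Ioi hinner]
    rw [MeasureTheory.integral_const_mul, Real.Gamma_eq_integral (by linarith : (0:ℝ) < 1 - s)]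
    norm_num
  -- RHS of swap
  have rhs_eq : ∫ u, ∫ v, f v u ∂μ ∂μ = ∫ u in Ioi (0:ℝ), u ^ (s-1) / (1+u) := by
    apply setIntegral_congr_fun measurableSet_Ioi
    intro u hu
    dsimp only
    have h1u : (0:ℝ) < 1 + u := by have := mem_Ioi.mp hu; linarith
    have : ∫ v, f v u ∂μ = u ^ (s-1) * ∫ v in Ioi (0:ℝ), v ^ ((1:ℝ)-1) * Real.exp (-((1+u)*v)) := by
      rw [hμ, ← MeasureTheory.integral_const_mul]
      apply setIntegral_congr_fun measurableSet_Ioi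
      intro v hv
      simp [hf, Real.rpow_zero]
    rw [this, gamma_rep one_pos h1u, Real.Gamma_one, Real.rpow_neg_one, one_mul, div_eq_mul_inv]
  rw [← rhs_eq, ← swap, lhs_eq]


lemma J_integrable {α : ℝ} (h1 : 0 < α) (h2 : α < 2) :
    IntegrableOn (fun t : ℝ => t ^ (α-1) / (1 + t^2)) (Ioi 0) := by
  have hmeas : Measurable (fun t : ℝ => t ^ (α-1) / (1 + t^2)) := by
    exact (measurable_id.pow_const _).div ((measurable_const.add (measurable_id.pow_const _)))
  rw [← Ioc_union_Ioi_eq_Ioi (zero_le_one : (0:ℝ) ≤ 1), integrableOn_union]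
  constructor
  · have base : IntegrableOn (fun t : ℝ => t ^ (α-1)) (Ioc 0 1) := by
      rw [← intervalIntegrable_iff_integrableOn_Ioc_of_le zero_le_one]
      exact intervalIntegrable_rpow' (by linarith)
    apply base.mono' hmeas.aestronglyMeasurable
    filter_upwards [ae_restrict_mem measurableSet_Ioc] with t ht
    rw [Real.norm_eq_abs, abs_div, abs_of_nonneg (Real.rpow_nonneg ht.1.le _),
      abs_of_pos (by positivity : (0:ℝ) < 1 + t^2)]
    rw [div_le_iff₀ (by positivity)]
    nlinarith [Real.rpow_nonneg ht.1.le (α-1), sq_nonneg t]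
  · have base : IntegrableOn (fun t : ℝ => t ^ (α-3)) (Ioi 1) :=
      integrableOn_Ioi_rpow_of_lt (by linarith) one_pos
    apply base.mono' hmeas.aestronglyMeasurable
    filter_upwards [ae_restrict_mem measurableSet_Ioi] with t ht
    have ht1 : (1:ℝ) < t := ht
    have ht0 : (0:ℝ) < t := by linarith
    rw [Real.norm_eq_abs, abs_div, abs_of_nonneg (Real.rpow_nonneg ht0.le _),
      abs_of_pos (by positivity : (0:ℝ) < 1 + t^2)]
    rw [div_le_iff₀ (by positivity)]
    have : t ^ (α-3) * t^2 = t ^ (α-1) := by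
      rw [← Real.rpow_natCast t 2, ← Real.rpow_add ht0]
      norm_num
      ring_nf
    nlinarith [Real.rpow_nonneg ht0.le (α-3)]


lemma J_eval {α : ℝ} (h1 : 0 < α) (h2 : α < 2) :
    ∫ t in Ioi (0:ℝ), t ^ (α-1) / (1 + t^2)
      = Real.Gamma (α/2) * Real.Gamma (1-α/2) / 2 := by
  have key := integral_comp_rpow_Ioi_of_pos (g := fun y : ℝ => y ^ (α/2-1) / (1+y))
    (p := 2) two_pos
  rw [K_eval (by linarith) (by linarith)] at key
  have congr1 : ∀ x ∈ Ioi (0:ℝ),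
      ((2:ℝ) * x ^ ((2:ℝ)-1)) • ((fun y : ℝ => y ^ (α/2-1) / (1+y)) (x ^ (2:ℝ)))
        = 2 * (x ^ (α-1) / (1 + x^2)) := by
    intro x hx
    have hx0 : (0:ℝ) < x := hx
    have e1 : x ^ ((2:ℝ)-1) = x := by norm_num
    have e2 : (x ^ (2:ℝ)) ^ (α/2-1) = x ^ (α-2) := by
      rw [← Real.rpow_mul hx0.le]
      congr 1
      ring
    have e3 : x ^ (2:ℝ) = x ^ (2:ℕ) := by
      rw [show ((2:ℝ)) = ((2:ℕ):ℝ) by norm_num, Real.rpow_natCast]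
    have e4 : x * x ^ (α-2) = x ^ (α-1) := by
      nth_rewrite 1 [← Real.rpow_one x]
      rw [← Real.rpow_add hx0]
      ring_nf
    have e23 : (x ^ (2:ℝ)) ^ (α/2-1) / (1 + x ^ (2:ℝ)) = x ^ (α-2) / (1+x^(2:ℕ)) := by
      rw [e2, e3]
    simp only [smul_eq_mul, e1, e23]
    rw [← e4]
    ring
  rw [setIntegral_congr_fun measurableSet_Ioi congr1] at key
  rw [MeasureTheory.integral_const_mul] at key
  linarith


section
variable {α T : ℝ}

-- variant with t*T order
lemma gamma_integrable' (ha : 0 < α) (hT : 0 < T) :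
    IntegrableOn (fun t : ℝ => t ^ (α-1) * Real.exp (-(t*T))) (Ioi 0) := by
  refine (gamma_integrable ha hT).congr_fun (fun t _ => ?_) measurableSet_Ioi
  beta_reduce
  rw [mul_comm T t]

lemma gamma_rep' (ha : 0 < α) (hT : 0 < T) :
    ∫ t in Ioi (0:ℝ), t ^ (α-1) * Real.exp (-(t*T)) = Real.Gamma α * T ^ (-α) := by
  rw [← gamma_rep ha hT]
  refine setIntegral_congr_fun measurableSet_Ioi (fun t _ => ?_)
  rw [mul_comm T t]

lemma R_pointwise_bound (ht : (0:ℝ) < t) :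
    ‖t ^ (α-1) * Real.exp (-(t*T)) * (t * Real.sin T + Real.cos T) / (t^2+1)‖
      ≤ 2 * (t ^ (α-1) * Real.exp (-(t*T))) := by
  have h0 : (0:ℝ) < t^2+1 := by positivity
  have hr : (0:ℝ) ≤ t ^ (α-1) := Real.rpow_nonneg ht.le _
  have he : (0:ℝ) ≤ Real.exp (-(t*T)) := Real.exp_nonneg _
  rw [Real.norm_eq_abs, abs_div, abs_of_pos h0, abs_mul, abs_mul,
    abs_of_nonneg hr, abs_of_nonneg he, div_le_iff₀ h0]
  have habs : |t * Real.sin T + Real.cos T| ≤ t + 1 := by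
    calc |t * Real.sin T + Real.cos T| ≤ |t * Real.sin T| + |Real.cos T| := abs_add_le _ _
    _ ≤ t * 1 + 1 := by
        rw [abs_mul, abs_of_pos ht]
        exact add_le_add (mul_le_mul_of_nonneg_left (Real.abs_sin_le_one T) ht.le)
          (Real.abs_cos_le_one T)
    _ = t + 1 := by ring
  nlinarith [mul_nonneg hr he, mul_le_mul_of_nonneg_left habs (mul_nonneg hr he),
    abs_nonneg (t * Real.sin T + Real.cos T), sq_nonneg t, sq_nonneg (t-1)]

lemma R_integrable (ha : 0 < α) (hT : 0 < T) :
    IntegrableOn (fun t : ℝ =>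
      t ^ (α-1) * Real.exp (-(t*T)) * (t * Real.sin T + Real.cos T) / (t^2+1)) (Ioi 0) := by
  have hmeas : Measurable (fun t : ℝ =>
      t ^ (α-1) * Real.exp (-(t*T)) * (t * Real.sin T + Real.cos T) / (t^2+1)) := by
    fun_prop
  apply Integrable.mono' (((gamma_integrable' ha hT).const_mul 2)) hmeas.aestronglyMeasurable
  filter_upwards [ae_restrict_mem measurableSet_Ioi] with t ht
  exact R_pointwise_bound ht

lemma R_bound (ha : 0 < α) (hT : 0 < T) :
    ‖∫ t in Ioi (0:ℝ),
        t ^ (α-1) * Real.exp (-(t*T)) * (t * Real.sin T + Real.cos T) / (t^2+1)‖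
      ≤ 2 * (Real.Gamma α * T ^ (-α)) := by
  calc ‖∫ t in Ioi (0:ℝ),
        t ^ (α-1) * Real.exp (-(t*T)) * (t * Real.sin T + Real.cos T) / (t^2+1)‖
      ≤ ∫ t in Ioi (0:ℝ),
        ‖t ^ (α-1) * Real.exp (-(t*T)) * (t * Real.sin T + Real.cos T) / (t^2+1)‖ :=
      MeasureTheory.norm_integral_le_integral_norm _
    _ ≤ ∫ t in Ioi (0:ℝ), 2 * (t ^ (α-1) * Real.exp (-(t*T))) := by
        apply setIntegral_mono_on ((R_integrable ha hT).norm)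
          ((gamma_integrable' ha hT).const_mul 2) measurableSet_Ioi
        exact fun t ht => R_pointwise_bound ht
    _ = 2 * (Real.Gamma α * T ^ (-α)) := by
        rw [MeasureTheory.integral_const_mul, gamma_rep' ha hT]

end


lemma fubini_step {α T : ℝ} (h1 : 0 < α) (h2 : α < 2) (hT : 0 < T) :
    Real.Gamma α * ∫ y in (0:ℝ)..T, y ^ (-α) * Real.sin y
      = (∫ t in Ioi (0:ℝ), t ^ (α-1) / (1 + t^2))
        - ∫ t in Ioi (0:ℝ),
            t ^ (α-1) * Real.exp (-(t*T)) * (t * Real.sin T + Real.cos T) / (t^2+1) := by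
  set μ := volume.restrict (Ioc (0:ℝ) T) with hμ
  set ν := volume.restrict (Ioi (0:ℝ)) with hν
  set f : ℝ → ℝ → ℝ := fun y t => t ^ (α-1) * Real.exp (-(y*t)) * Real.sin y with hf
  have hmeas : AEStronglyMeasurable (Function.uncurry f) (μ.prod ν) := by
    apply Measurable.aestronglyMeasurable
    exact ((measurable_snd.pow_const _).mul
      ((measurable_fst.mul measurable_snd).neg.exp)).mul measurable_fst.sin
  have hint_t : ∀ y : ℝ, 0 < y → Integrable (fun t => f y t) ν := by
    intro y hy
    exact ((gamma_integrable h1 hy).mul_const _)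
  have hnorm_t : ∀ y : ℝ, 0 < y →
      ∫ t, ‖f y t‖ ∂ν = Real.Gamma α * y ^ (-α) * |Real.sin y| := by
    intro y hy
    have : ∀ t ∈ Ioi (0:ℝ), ‖f y t‖ = t ^ (α-1) * Real.exp (-(y*t)) * |Real.sin y| := by
      intro t ht
      rw [hf]
      simp only
      rw [Real.norm_eq_abs, abs_mul, abs_mul, abs_of_nonneg (Real.rpow_nonneg (le_of_lt ht) _),
        abs_of_nonneg (Real.exp_nonneg _)]
    rw [hν, setIntegral_congr_fun measurableSet_Ioi this, MeasureTheory.integral_mul_const,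
      gamma_rep h1 hy]
  have hint : Integrable (Function.uncurry f) (μ.prod ν) := by
    rw [MeasureTheory.integrable_prod_iff hmeas]
    constructor
    · filter_upwards [ae_restrict_mem measurableSet_Ioc] with y hy
      exact hint_t y hy.1
    · have base : Integrable (fun y : ℝ => Real.Gamma α * y ^ (1-α)) μ := by
        apply Integrable.const_mul
        rw [hμ, ← IntegrableOn, ← intervalIntegrable_iff_integrableOn_Ioc_of_le hT.le]
        exact intervalIntegrable_rpow' (by linarith)
      have hbnd : Integrable (fun y : ℝ => Real.Gamma α * y ^ (-α) * |Real.sin y|) μ := by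
        apply base.mono'
        · apply Measurable.aestronglyMeasurable
          exact ((measurable_const.mul (measurable_id.pow_const _)).mul measurable_sin.abs)
        · filter_upwards [ae_restrict_mem measurableSet_Ioc] with y hy
          have hy0 : 0 < y := hy.1
          have hG : 0 ≤ Real.Gamma α := (Real.Gamma_pos_of_pos h1).le
          rw [Real.norm_eq_abs, abs_mul, abs_mul, abs_of_nonneg hG,
            abs_of_nonneg (Real.rpow_nonneg hy0.le _), abs_abs]
          calc Real.Gamma α * y ^ (-α) * |Real.sin y|
              ≤ Real.Gamma α * y ^ (-α) * y := by
                apply mul_le_mul_of_nonneg_left _ (by positivity)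
                calc |Real.sin y| ≤ |y| := Real.abs_sin_le_abs
                _ = y := abs_of_pos hy0
            _ = Real.Gamma α * y ^ (1-α) := by
                rw [mul_assoc]
                congr 1
                nth_rewrite 2 [← Real.rpow_one y]
                rw [← Real.rpow_add hy0]
                ring_nf
      apply hbnd.congr
      filter_upwards [ae_restrict_mem measurableSet_Ioc] with y hy
      simp only [Function.uncurry_apply_pair]
      rw [← hnorm_t y hy.1, hν]
  have swap := MeasureTheory.integral_integral_swap hint
  -- LHS of swap equals Γ α * interval integral
  have lhs_eq : ∫ y, ∫ t, f y t ∂ν ∂μ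
      = Real.Gamma α * ∫ y in (0:ℝ)..T, y ^ (-α) * Real.sin y := by
    rw [intervalIntegral.integral_of_le hT.le, ← MeasureTheory.integral_const_mul, hμ]
    apply setIntegral_congr_fun measurableSet_Ioc
    intro y hy
    have hy0 : 0 < y := hy.1
    dsimp only
    have : ∀ t : ℝ, f y t = (t ^ (α-1) * Real.exp (-(y*t))) * Real.sin y := fun t => rfl
    rw [hν]
    calc ∫ t in Ioi (0:ℝ), f y t
        = (∫ t in Ioi (0:ℝ), t ^ (α-1) * Real.exp (-(y*t))) * Real.sin y := by
          rw [← MeasureTheory.integral_mul_const]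
      _ = Real.Gamma α * (y ^ (-α) * Real.sin y) := by rw [gamma_rep h1 hy0]; ring
  -- RHS of swap
  have rhs_eq : ∫ t, ∫ y, f y t ∂μ ∂ν
      = (∫ t in Ioi (0:ℝ), t ^ (α-1) / (1 + t^2))
        - ∫ t in Ioi (0:ℝ),
            t ^ (α-1) * Real.exp (-(t*T)) * (t * Real.sin T + Real.cos T) / (t^2+1) := by
    have inner_eq : ∀ t ∈ Ioi (0:ℝ), ∫ y, f y t ∂μ
        = t ^ (α-1) / (1 + t^2)
          - t ^ (α-1) * Real.exp (-(t*T)) * (t * Real.sin T + Real.cos T) / (t^2+1) := by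
      intro t ht
      have hden : (0:ℝ) < t^2 + 1 := by positivity
      have : ∫ y, f y t ∂μ = ∫ y in (0:ℝ)..T, t ^ (α-1) * (Real.exp (-(t*y)) * Real.sin y) := by
        rw [hμ, ← intervalIntegral.integral_of_le hT.le]
        apply intervalIntegral.integral_congr
        intro y _
        rw [hf]
        simp only
        rw [mul_comm y t, mul_assoc]
      rw [this, intervalIntegral.integral_const_mul, laplace_sin_interval t T]
      field_simp
      ring
    rw [hν, setIntegral_congr_fun measurableSet_Ioi inner_eq]
    rw [MeasureTheory.integral_sub ((J_integrable h1 h2).congr_fun ?e1 measurableSet_Ioi)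
      (R_integrable h1 hT)]
    case e1 => exact fun t ht => rfl
  rw [← lhs_eq, swap, rhs_eq]


theorem improper_integral_sin_rpow (α : ℝ) (h1 : 0 < α) (h2 : α < 2) :
    Tendsto (fun T : ℝ => ∫ y in (0:ℝ)..T, y ^ (-α) * Real.sin y) atTop
      (nhds ((π / 2) / (Real.Gamma α * Real.sin (π * α / 2)))) := by
  have hΓ : 0 < Real.Gamma α := Real.Gamma_pos_of_pos h1
  have hπ := Real.pi_pos
  have hsin : 0 < Real.sin (π * α / 2) :=
    Real.sin_pos_of_pos_of_lt_pi (by positivity) (by nlinarith)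
  set J := ∫ t in Ioi (0:ℝ), t ^ (α-1) / (1 + t^2) with hJ
  set R := fun T : ℝ => ∫ t in Ioi (0:ℝ),
      t ^ (α-1) * Real.exp (-(t*T)) * (t * Real.sin T + Real.cos T) / (t^2+1) with hRdef
  have hR0 : Tendsto R atTop (nhds 0) := by
    refine squeeze_zero_norm' (a := fun T : ℝ => 2 * (Real.Gamma α * T ^ (-α))) ?_ ?_
    · filter_upwards [eventually_gt_atTop (0:ℝ)] with T hT
      exact R_bound h1 hT
    · have := (tendsto_rpow_neg_atTop h1).const_mul (2 * Real.Gamma α)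
      rw [mul_zero] at this
      refine this.congr (fun T => by ring)
  have key : Tendsto (fun T => (J - R T) / Real.Gamma α) atTop
      (nhds ((J - 0) / Real.Gamma α)) := (tendsto_const_nhds.sub hR0).div_const _
  have main : Tendsto (fun T : ℝ => ∫ y in (0:ℝ)..T, y ^ (-α) * Real.sin y) atTop
      (nhds ((J - 0) / Real.Gamma α)) := by
    apply key.congr'
    filter_upwards [eventually_gt_atTop (0:ℝ)] with T hT
    have := fubini_step h1 h2 hT
    have hRT : R T = ∫ t in Ioi (0:ℝ),
        t ^ (α-1) * Real.exp (-(t*T)) * (t * Real.sin T + Real.cos T) / (t^2+1) := rfl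
    rw [hRT, ← hJ] at *
    rw [div_eq_iff hΓ.ne']
    linarith
  convert main using 2
  rw [sub_zero, hJ, J_eval h1 h2, Real.Gamma_mul_Gamma_one_sub (α/2),
    show π * (α/2) = π * α / 2 by ring]
  rw [div_div, div_div, div_eq_div_iff (by positivity) (by positivity)]
  field_simp
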